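/- Let n ≥ 1 be an integer, let k ∈ ℤⁿ be nonzero, let a ∈ ℝ and δ > 0. Then the n-dimensional Lebesgue measure of the set {ω ∈ [0,2π]ⁿ : |k·ω + a| ≤ δ} is at most (2π)^{n(n−1)} · 4δ / |k|₁. -/

import Mathlib

open Real MeasureTheory

/-- Measure estimate of a single resonance zone: for a nonzero integer vector `k ∈ ℤⁿ`,
`a ∈ ℝ` and `δ > 0`, the Lebesgue measure of
`{ω ∈ [0,2π]ⁿ : |k·ω + a| ≤ δ}` is at most `(2π)^{n(n-1)} · 4δ / |k|₁`. -/
theorem resonance_zone_measure (n : ℕ) (hn : 1 ≤ n) (k : Fin n → ℤ) (hk : k ≠ 0)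
    (a δ : ℝ) (hδ : 0 < δ) :
    volume {ω : Fin n → ℝ |
        (∀ i, ω i ∈ Set.Icc 0 (2 * π)) ∧ |(∑ i, (k i : ℝ) * ω i) + a| ≤ δ} ≤
      ENNReal.ofReal ((2 * π) ^ (n * (n - 1)) * (4 * δ) / (∑ i, |(k i : ℝ)|)) := by
  classical
  have hne : (Finset.univ : Finset (Fin n)).Nonempty := ⟨⟨0, hn⟩, Finset.mem_univ _⟩
  obtain ⟨i₀, -, hi₀⟩ := Finset.exists_max_image Finset.univ (fun i => |k i|) hne
  obtain ⟨j, hj⟩ := Function.ne_iff.mp hk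
  have hj' : k j ≠ 0 := by simpa using hj
  have hki₀ : k i₀ ≠ 0 := by
    intro h
    have h1 := hi₀ j (Finset.mem_univ j)
    exact hj' (abs_eq_zero.mp (le_antisymm (by simpa [h] using h1) (abs_nonneg _)))
  set c : Fin n → ℝ := fun j => (k j : ℝ) with hc
  have hci₀ : c i₀ ≠ 0 := by simpa [hc] using hki₀
  have habs : 0 < |c i₀| := abs_pos.mpr hci₀
  set M : Matrix (Fin n) (Fin n) ℝ := Matrix.updateRow 1 i₀ c with hM
  have hdet : LinearMap.det (Matrix.toLin' M) = c i₀ := by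
    rw [LinearMap.det_toLin', hM, ← Matrix.cramer_transpose_apply, Matrix.transpose_one,
      Matrix.cramer_one]
    rfl
  have hdet0 : LinearMap.det (Matrix.toLin' M) ≠ 0 := hdet ▸ hci₀
  set B : Fin n → Set ℝ := fun j => if j = i₀ then Set.Icc (-a - δ) (-a + δ) else Set.Icc 0 (2 * π)
    with hB
  have hsub : {ω : Fin n → ℝ |
        (∀ i, ω i ∈ Set.Icc 0 (2 * π)) ∧ |(∑ i, (k i : ℝ) * ω i) + a| ≤ δ} ⊆
      Matrix.toLin' M ⁻¹' Set.pi Set.univ B := by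
    rintro ω ⟨h1, h2⟩ l -
    have hml : (Matrix.toLin' M) ω l = if l = i₀ then ∑ i, (k i : ℝ) * ω i else ω l := by
      by_cases hl : l = i₀ <;>
        simp [Matrix.toLin'_apply, hM, hc, Matrix.mulVec, dotProduct, hl,
          Matrix.one_apply, Finset.sum_ite_eq]
    by_cases hl : l = i₀
    · rw [hml, if_pos hl]
      have hBl : B l = Set.Icc (-a - δ) (-a + δ) := by rw [hB]; simp [hl]
      rw [hBl, Set.mem_Icc]
      rw [abs_le] at h2
      exact ⟨by linarith [h2.1], by linarith [h2.2]⟩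
    · rw [hml, if_neg hl]
      have hBl : B l = Set.Icc 0 (2 * π) := by rw [hB]; simp [hl]
      rw [hBl]
      exact h1 l
  calc volume {ω : Fin n → ℝ |
        (∀ i, ω i ∈ Set.Icc 0 (2 * π)) ∧ |(∑ i, (k i : ℝ) * ω i) + a| ≤ δ}
      ≤ volume (Matrix.toLin' M ⁻¹' Set.pi Set.univ B) := measure_mono hsub
    _ = ENNReal.ofReal |(c i₀)⁻¹| * volume (Set.pi Set.univ B) := by
        rw [Measure.addHaar_preimage_linearMap volume hdet0, hdet]
    _ = ENNReal.ofReal |(c i₀)⁻¹| * (ENNReal.ofReal (2 * δ) * ENNReal.ofReal (2 * π) ^ (n - 1)) := by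
        rw [volume_pi_pi]
        congr 1
        rw [← Finset.mul_prod_erase Finset.univ _ (Finset.mem_univ i₀)]
        have h1 : volume (B i₀) = ENNReal.ofReal (2 * δ) := by
          rw [hB]; simp only [↓reduceIte, Real.volume_Icc]; congr 1; ring
        have h2 : ∀ l ∈ Finset.univ.erase i₀, volume (B l) = ENNReal.ofReal (2 * π) := by
          intro l hl
          have : l ≠ i₀ := (Finset.mem_erase.mp hl).1
          simp [hB, this, Real.volume_Icc]
        rw [h1, Finset.prod_congr rfl h2, Finset.prod_const,
          Finset.card_erase_of_mem (Finset.mem_univ i₀), Finset.card_univ, Fintype.card_fin]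
    _ = ENNReal.ofReal (|(c i₀)⁻¹| * (2 * δ * (2 * π) ^ (n - 1))) := by
        rw [← ENNReal.ofReal_pow (by positivity), ← ENNReal.ofReal_mul (by positivity),
          ← ENNReal.ofReal_mul (by positivity)]
    _ ≤ ENNReal.ofReal ((2 * π) ^ (n * (n - 1)) * (4 * δ) / (∑ i, |(k i : ℝ)|)) := by
        apply ENNReal.ofReal_le_ofReal
        have hK : (0:ℝ) < ∑ i, |(k i : ℝ)| := by
          apply Finset.sum_pos'
          · intro i _; positivity
          · exact ⟨i₀, Finset.mem_univ _, habs⟩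
        have hsum : (∑ i, |(k i : ℝ)|) ≤ n * |c i₀| := by
          have := Finset.sum_le_card_nsmul Finset.univ (fun i => |(k i : ℝ)|) |c i₀|
            (fun i _ => by
              have h := hi₀ i (Finset.mem_univ i)
              show |((k i : ℝ))| ≤ |((k i₀ : ℝ))|
              exact_mod_cast h)
          simpa [nsmul_eq_mul] using this
        have h2π : (1:ℝ) ≤ 2 * π := by nlinarith [Real.pi_gt_three]
        have hnpow : (n:ℝ) * (2 * π) ^ (n - 1) ≤ 2 * (2 * π) ^ (n * (n - 1)) := by
          have hn2 : (n:ℝ) ≤ 2 * (2 * π) ^ (n - 1) := by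
            calc (n:ℝ) ≤ 2 ^ n := by exact_mod_cast (Nat.lt_two_pow_self (n := n)).le
              _ = 2 * 2 ^ (n - 1) := by
                  rw [← pow_succ']; congr 1; omega
              _ ≤ 2 * (2 * π) ^ (n - 1) := by
                  have : (2:ℝ) ^ (n-1) ≤ (2*π) ^ (n-1) :=
                    pow_le_pow_left₀ (by norm_num) (by nlinarith [Real.pi_gt_three]) _
                  linarith
          have hexp : 2 * (n - 1) ≤ n * (n - 1) := by
            rcases eq_or_lt_of_le hn with h | h
            · simp [← h]
            · exact Nat.mul_le_mul_right _ h
          calc (n:ℝ) * (2 * π) ^ (n - 1) ≤ (2 * (2 * π) ^ (n - 1)) * (2 * π) ^ (n - 1) := by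
                apply mul_le_mul_of_nonneg_right hn2 (by positivity)
            _ = 2 * (2 * π) ^ (2 * (n - 1)) := by rw [two_mul (n-1), pow_add]; ring
            _ ≤ 2 * (2 * π) ^ (n * (n - 1)) := by
                have := pow_le_pow_right₀ h2π hexp
                linarith
        rw [abs_inv, inv_mul_eq_div, div_le_div_iff₀ habs hK]
        calc 2 * δ * (2 * π) ^ (n - 1) * ∑ i, |(k i : ℝ)|
            ≤ 2 * δ * (2 * π) ^ (n - 1) * (n * |c i₀|) := by
              apply mul_le_mul_of_nonneg_left hsum (by positivity)
          _ = ((n:ℝ) * (2 * π) ^ (n - 1)) * (2 * δ * |c i₀|) := by ring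
          _ ≤ (2 * (2 * π) ^ (n * (n - 1))) * (2 * δ * |c i₀|) := by
              apply mul_le_mul_of_nonneg_right hnpow (by positivity)
          _ = (2 * π) ^ (n * (n - 1)) * (4 * δ) * |c i₀| := by ring
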